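/- The generalized multi poly-Euler polynomials satisfy the addition formula E_n^{(k_1,…,k_r)}(x+y; a, b, c) = Σ_{i=0}^{n} C(n,i) (r ln c)^{n-i} E_i^{(k_1,…,k_r)}(x; a, b, c) y^{n-i}. -/

import Mathlib

/-- The multiple polylogarithm
`Li_{(k_1,…,k_r)}(z) = ∑_{1 ≤ m_1 ≤ … ≤ m_r} z^{m_r}/(m_1^{k_1} ⋯ m_r^{k_r})`. -/
noncomputable def multiPolyLog (r : ℕ) (hr : 0 < r) (k : Fin r → ℤ) (z : ℝ) : ℝ :=
  ∑' f : {f : Fin r → ℕ // Monotone f ∧ 0 < f ⟨0, hr⟩},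
    z ^ (f.1 ⟨r - 1, Nat.sub_lt hr Nat.one_pos⟩) / ∏ i, ((f.1 i : ℝ)) ^ (k i)

/-- If a power series sums to `f` on a ball of radius `ε`, then `f` has the corresponding
formal power series at `0`. -/
lemma hasFPowerSeriesAt_of_hasSum (a : ℕ → ℝ) (f : ℝ → ℝ) (ε : ℝ) (hε : 0 < ε)
    (ha : ∀ t : ℝ, |t| < ε → HasSum (fun n : ℕ => a n * t ^ n) (f t)) :
    HasFPowerSeriesAt f (FormalMultilinearSeries.ofScalars ℝ a) 0 := by
  refine ⟨ENNReal.ofReal (ε / 2), ?_, ?_, ?_⟩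
  · -- radius bound
    have hsum : Summable fun n => ‖FormalMultilinearSeries.ofScalars ℝ a n‖ * (ε / 2) ^ n := by
      have h1 : Summable fun n : ℕ => a n * (ε / 2) ^ n := by
        refine (ha (ε / 2) ?_).summable
        rw [abs_of_pos (by linarith)]; linarith
      have h2 : Summable fun n : ℕ => |a n * (ε / 2) ^ n| := h1.abs
      refine h2.congr fun n => ?_
      rw [FormalMultilinearSeries.ofScalars_norm, Real.norm_eq_abs, abs_mul, abs_pow,
        abs_of_nonneg (show (0:ℝ) ≤ ε / 2 by linarith)]
    have := FormalMultilinearSeries.le_radius_of_summable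
      (r := ⟨ε / 2, by linarith⟩) _ hsum
    rwa [ENNReal.ofReal, Real.toNNReal_of_nonneg (by linarith)]
  · exact ENNReal.ofReal_pos.mpr (by linarith)
  · intro t ht
    have ht' : |t| < ε := by
      have h4 : dist t 0 < ε / 2 := by
        have h5 := ht
        rw [EMetric.mem_ball, edist_dist] at h5
        exact (ENNReal.ofReal_lt_ofReal_iff (by linarith)).mp h5
      rw [Real.dist_eq, sub_zero] at h4
      linarith
    have := ha t ht'
    simp only [zero_add]
    refine this.congr_fun fun n => ?_
    rw [FormalMultilinearSeries.ofScalars_apply_eq, smul_eq_mul]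

/-- Uniqueness of power series coefficients. -/
lemma coeff_unique (a b : ℕ → ℝ) (f : ℝ → ℝ) (ε : ℝ) (hε : 0 < ε)
    (ha : ∀ t : ℝ, |t| < ε → HasSum (fun n : ℕ => a n * t ^ n) (f t))
    (hb : ∀ t : ℝ, |t| < ε → HasSum (fun n : ℕ => b n * t ^ n) (f t)) : a = b := by
  have h1 := hasFPowerSeriesAt_of_hasSum a f ε hε ha
  have h2 := hasFPowerSeriesAt_of_hasSum b f ε hε hb
  have := h1.eq_formalMultilinearSeries h2
  exact (FormalMultilinearSeries.ofScalars_series_eq_iff ℝ a b).mp this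

/-- Addition formula: `E_n^{(k⃗)}(x+y;a,b,c)
  = ∑_{i=0}^n C(n,i) (r ln c)^{n-i} E_i^{(k⃗)}(x;a,b,c) y^{n-i}`. -/
theorem multi_polyEuler_addition
    (r : ℕ) (hr : 0 < r) (k : Fin r → ℤ)
    (a b c : ℝ) (ha : 0 < a) (hb : 0 < b) (hc : 0 < c)
    (E : ℕ → ℝ → ℝ) (ε : ℝ) (hε : 0 < ε)
    (hE : ∀ x t : ℝ, |t| < ε →
      HasSum (fun n : ℕ => E n x * t ^ n / (n.factorial : ℝ))
        (2 * multiPolyLog r hr k (1 - (a * b) ^ (-t)) / (a ^ (-t) + b ^ t) ^ r *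
          c ^ ((r : ℝ) * x * t)))
    (n : ℕ) (x y : ℝ) :
    E n (x + y) = ∑ i ∈ Finset.range (n + 1),
      (n.choose i : ℝ) * ((r : ℝ) * Real.log c) ^ (n - i) * E i x * y ^ (n - i) := by
  set A : ℕ → ℝ := fun m => E m (x + y) / m.factorial with hA
  set B : ℕ → ℝ := fun m => (∑ i ∈ Finset.range (m + 1),
      (m.choose i : ℝ) * ((r : ℝ) * Real.log c) ^ (m - i) * E i x * y ^ (m - i)) /
      m.factorial with hB
  set f : ℝ → ℝ := fun t =>
    2 * multiPolyLog r hr k (1 - (a * b) ^ (-t)) / (a ^ (-t) + b ^ t) ^ r *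
      c ^ ((r : ℝ) * (x + y) * t) with hf
  have hAB : A = B := by
    refine coeff_unique A B f ε hε ?_ ?_
    · intro t ht
      have := hE (x + y) t ht
      refine this.congr_fun fun m => ?_
      simp only [hA]; ring
    · intro t ht
      -- Cauchy product of the series for E at x and the exponential series
      have hu := hE x t ht
      set w : ℝ := (r : ℝ) * Real.log c * y * t with hw
      have hv : HasSum (fun m : ℕ => w ^ m / m.factorial) (Real.exp w) := by
        rw [Real.exp_eq_exp_ℝ]
        exact NormedSpace.expSeries_div_hasSum_exp w
      have hunorm : Summable fun m : ℕ => ‖E m x * t ^ m / (m.factorial : ℝ)‖ := by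
        simpa only [Real.norm_eq_abs] using hu.summable.abs
      have hvnorm : Summable fun m : ℕ => ‖w ^ m / (m.factorial : ℝ)‖ := by
        simpa only [Real.norm_eq_abs] using hv.summable.abs
      have hprod := hasSum_sum_range_mul_of_summable_norm hunorm hvnorm
      rw [hu.tsum_eq, hv.tsum_eq] at hprod
      have hval : 2 * multiPolyLog r hr k (1 - (a * b) ^ (-t)) / (a ^ (-t) + b ^ t) ^ r *
          c ^ ((r : ℝ) * x * t) * Real.exp w = f t := by
        simp only [hf]
        rw [show (r : ℝ) * (x + y) * t = (r : ℝ) * x * t + (r : ℝ) * y * t by ring,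
          Real.rpow_add hc]
        rw [show c ^ ((r : ℝ) * y * t) = Real.exp ((r : ℝ) * Real.log c * y * t) by
          rw [Real.rpow_def_of_pos hc]; ring_nf]
        rw [hw]; ring
      rw [hval] at hprod
      refine hprod.congr_fun fun m => ?_
      -- show the m-th Cauchy coefficient equals B m * t ^ m
      simp only [hB]
      rw [Finset.sum_div, Finset.sum_mul]
      refine Finset.sum_congr rfl fun i hi => ?_
      have him : i ≤ m := Nat.lt_succ_iff.mp (Finset.mem_range.mp hi)
      have hfacm : (m.factorial : ℝ) ≠ 0 := Nat.cast_ne_zero.mpr m.factorial_ne_zero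
      have hfaci : (i.factorial : ℝ) ≠ 0 := Nat.cast_ne_zero.mpr i.factorial_ne_zero
      have hfacmi : ((m - i).factorial : ℝ) ≠ 0 :=
        Nat.cast_ne_zero.mpr (m - i).factorial_ne_zero
      have hchoose : (m.choose i : ℝ) =
          (m.factorial : ℝ) / (i.factorial * (m - i).factorial) := Nat.cast_choose ℝ him
      have htpow : t ^ i * t ^ (m - i) = t ^ m := by
        rw [← pow_add, Nat.add_sub_cancel' him]
      rw [hw, hchoose]
      have : ((r : ℝ) * Real.log c * y * t) ^ (m - i) =
          ((r : ℝ) * Real.log c) ^ (m - i) * y ^ (m - i) * t ^ (m - i) := by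
        rw [mul_pow, mul_pow, mul_pow]
      rw [this]
      field_simp
      ring_nf
      rw [← htpow]
      ring
  have hfac : (n.factorial : ℝ) ≠ 0 := Nat.cast_ne_zero.mpr n.factorial_ne_zero
  have := congrFun hAB n
  simp only [hA, hB] at this
  field_simp at this
  exact this
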